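/- Let φ₁, φ₂ : ℝ → ℝ be positive, bounded and uniformly continuous, and let (u₁, u₂) be a classical solution of the Lotka–Volterra cooperative system with initial data (φ₁, φ₂) taking nonnegative values. Then for every c with 0 < c < 2√(d₁r₁), one has liminf_{t→∞} inf_{|x| ≤ ct} u₁(t,x) ≥ 1. -/

import Mathlib

open Real Set Filter Topology MeasureTheory

/-- Partial derivative in time of a function `u : ℝ → ℝ → ℝ` (time, then space). -/
noncomputable def pdT (u : ℝ → ℝ → ℝ) (t x : ℝ) : ℝ := deriv (fun s => u s x) t

/-- Second partial derivative in space of a function `u : ℝ → ℝ → ℝ`. -/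
noncomputable def pdXX (u : ℝ → ℝ → ℝ) (t x : ℝ) : ℝ := deriv (deriv (u t)) x

/-- A function `u : [0,∞) × ℝ → ℝ` (encoded as a total function) which is bounded and
uniformly continuous on `[0,∞) × ℝ`, continuously differentiable in `t` and twice
continuously differentiable in `x` on `(0,∞) × ℝ`. -/
structure RegularFn (u : ℝ → ℝ → ℝ) : Prop where
  bounded : ∃ M : ℝ, ∀ t x : ℝ, 0 ≤ t → |u t x| ≤ M
  unifCont : UniformContinuousOn (fun p : ℝ × ℝ => u p.1 p.2) (Ici 0 ×ˢ (univ : Set ℝ))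
  contT : ∀ x : ℝ, ContDiffOn ℝ 1 (fun s => u s x) (Ioi 0)
  contX : ∀ t : ℝ, 0 < t → ContDiff ℝ 2 (u t)

/-- `(u₁, u₂)` is a classical solution of the Lotka–Volterra cooperative system
`∂u₁/∂t = d₁ ∂²u₁/∂x² + r₁u₁(1 − u₁ + b₁u₂)`,
`∂u₂/∂t = d₂ ∂²u₂/∂x² + r₂u₂(1 − u₂ + b₂u₁)`
with initial data `(φ₁, φ₂)`. -/
structure IsLVSolution (d₁ d₂ r₁ r₂ b₁ b₂ : ℝ) (φ₁ φ₂ : ℝ → ℝ) (u₁ u₂ : ℝ → ℝ → ℝ) : Prop where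
  reg1 : RegularFn u₁
  reg2 : RegularFn u₂
  pde1 : ∀ t x : ℝ, 0 < t →
    pdT u₁ t x = d₁ * pdXX u₁ t x + r₁ * u₁ t x * (1 - u₁ t x + b₁ * u₂ t x)
  pde2 : ∀ t x : ℝ, 0 < t →
    pdT u₂ t x = d₂ * pdXX u₂ t x + r₂ * u₂ t x * (1 - u₂ t x + b₂ * u₁ t x)
  init1 : ∀ x : ℝ, u₁ 0 x = φ₁ x
  init2 : ∀ x : ℝ, u₂ 0 x = φ₂ x


lemma deriv_nonpos_of_left_min {f : ℝ → ℝ} {t₀ δ f' : ℝ} (hδ : 0 < δ)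
    (hf : HasDerivAt f f' t₀) (hmin : ∀ τ ∈ Icc (t₀ - δ) t₀, f t₀ ≤ f τ) : f' ≤ 0 := by
  have h := (hf.hasDerivWithinAt (s := Iio t₀))
  rw [hasDerivWithinAt_iff_tendsto_slope] at h
  have hEq : Iio t₀ \ {t₀} = Iio t₀ := by
    apply diff_singleton_eq_self; simp
  rw [hEq] at h
  have hne : (𝓝[Iio t₀] t₀).NeBot := nhdsLT_neBot t₀
  refine le_of_tendsto h ?_
  filter_upwards [Ioo_mem_nhdsLT_of_mem (⟨by linarith, le_rfl⟩ :
      t₀ ∈ Ioc (t₀ - δ) t₀)] with τ hτ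
  have h1 : f t₀ ≤ f τ := hmin τ ⟨hτ.1.le, hτ.2.le⟩
  have h2 : τ - t₀ < 0 := by linarith [hτ.2]
  rw [slope_def_field, div_nonpos_iff]
  left
  exact ⟨by linarith, by linarith⟩

/-- second derivative is nonneg at an interior local minimum of a C² function. -/
lemma second_deriv_nonneg_of_isLocalMin {f : ℝ → ℝ} {a : ℝ} (hf : ContDiff ℝ 2 f)
    (hmin : IsLocalMin f a) : 0 ≤ deriv (deriv f) a := by
  by_contra hneg
  push_neg at hneg
  have hd : Differentiable ℝ f := hf.differentiable (by norm_num)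
  have hd' : Differentiable ℝ (deriv f) := by
    have := (contDiff_succ_iff_deriv (n := 1)).mp hf
    exact this.2.2.differentiable one_ne_zero
  have h1 : deriv f a = 0 := hmin.deriv_eq_zero
  have h2 : ∀ᶠ x in 𝓝[>] a, deriv f x < 0 := by
    have h := ((hd' a).hasDerivAt.hasDerivWithinAt (s := Ioi a))
    rw [hasDerivWithinAt_iff_tendsto_slope] at h
    have hEq : Ioi a \ {a} = Ioi a := by apply diff_singleton_eq_self; simp
    rw [hEq] at h
    have h3 : ∀ᶠ x in 𝓝[>] a, slope (deriv f) a x < 0 :=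
      h.eventually_lt_const hneg
    filter_upwards [h3, self_mem_nhdsWithin] with x hx hx'
    rw [slope_def_field, h1, sub_zero, div_neg_iff] at hx
    rcases hx with ⟨h4, h5⟩ | ⟨h4, h5⟩
    · simp at hx'; linarith
    · exact h4
  obtain ⟨b, hb, hball⟩ := mem_nhdsGT_iff_exists_Ioo_subset.mp h2
  obtain ⟨ε', hε', hball'⟩ := Metric.eventually_nhds_iff.mp hmin
  set x := min ((a + b)/2) (a + ε'/2) with hxdef
  have hxa : a < x := by
    apply lt_min
    · simp at hb; linarith
    · linarith
  obtain ⟨ξ, hξ, hξ2⟩ := exists_deriv_eq_slope f hxa (hd.continuous.continuousOn)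
    (fun y _ => (hd y).differentiableWithinAt)
  have hξneg : deriv f ξ < 0 := by
    apply hball
    constructor
    · exact hξ.1
    · calc ξ < x := hξ.2
        _ ≤ (a+b)/2 := min_le_left _ _
        _ < b := by simp at hb; linarith
  have hfx : f x < f a := by
    have h6 : (f x - f a) / (x - a) < 0 := hξ2 ▸ hξneg
    rcases div_neg_iff.mp h6 with ⟨h4, h5⟩ | ⟨h4, h5⟩
    · linarith
    · linarith
  have : f a ≤ f x := by
    apply hball'
    rw [Real.dist_eq, abs_of_pos (by linarith : (0:ℝ) < x - a)]
    have : x ≤ a + ε'/2 := min_le_right _ _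
    linarith
  linarith

set_option maxHeartbeats 1000000 in
/-- Parabolic comparison principle on a moving interval `[s t, s t + L]`, `t ∈ [0,T]`:
a supersolution `u` of `u_t = d u_xx + r u (1-u)` dominates the separated subsolution
`(t, x) ↦ ρ t * ψ (x - s t)` provided ordering holds on the parabolic boundary. -/
lemma comparison (d r s L T : ℝ) (hd : 0 < d) (hr : 0 < r) (hL : 0 < L) (hT : 0 ≤ T)
    (u : ℝ → ℝ → ℝ)
    (hucont : ContinuousOn (fun p : ℝ × ℝ => u p.1 p.2) (Ici 0 ×ˢ (univ : Set ℝ)))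
    (hut : ∀ x t : ℝ, 0 < t → DifferentiableAt ℝ (fun τ => u τ x) t)
    (hux : ∀ t : ℝ, 0 < t → ContDiff ℝ 2 (u t))
    (hsup : ∀ t x : ℝ, 0 < t → d * pdXX u t x + r * u t x * (1 - u t x) ≤ pdT u t x)
    (hupos : ∀ t x : ℝ, 0 ≤ t → 0 ≤ u t x)
    (ρ ψ : ℝ → ℝ)
    (hρ : Differentiable ℝ ρ) (hψ : ContDiff ℝ 2 ψ)
    (hρ0 : ∀ t, 0 ≤ ρ t)
    (hψrange : ∀ y ∈ Icc 0 L, 0 ≤ ψ y)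
    (hψ0 : ψ 0 = 0) (hψL : ψ L = 0)
    (hsub : ∀ t ∈ Icc (0:ℝ) T, ∀ y ∈ Icc (0:ℝ) L,
      deriv ρ t * ψ y ≤ d * (ρ t * deriv (deriv ψ) y) + s * (ρ t * deriv ψ y)
        + r * (ρ t * ψ y) * (1 - ρ t * ψ y))
    (hinit : ∀ y ∈ Icc (0:ℝ) L, ρ 0 * ψ y ≤ u 0 y) :
    ∀ t ∈ Icc (0:ℝ) T, ∀ y ∈ Icc (0:ℝ) L, ρ t * ψ y ≤ u t (s * t + y) := by
  set γ : ℝ := r + 1 with hγdef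
  set Z : ℝ × ℝ → ℝ := fun p => exp (-γ * p.1) * (u p.1 p.2 - ρ p.1 * ψ (p.2 - s * p.1))
    with hZdef
  set K : Set (ℝ × ℝ) := (fun q : ℝ × ℝ => (q.1, s * q.1 + q.2)) '' (Icc 0 T ×ˢ Icc 0 L)
    with hKdef
  have hψd : Differentiable ℝ ψ := hψ.differentiable (by norm_num)
  have hψd' : Differentiable ℝ (deriv ψ) := by
    have := (contDiff_succ_iff_deriv (n := 1)).mp hψ
    exact this.2.2.differentiable one_ne_zero
  have hKcpt : IsCompact K := (isCompact_Icc.prod isCompact_Icc).image (by fun_prop)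
  have hKne : K.Nonempty := ⟨(0, s * 0 + 0), ⟨(0, 0), ⟨⟨le_rfl, hT⟩, ⟨le_rfl, hL.le⟩⟩, rfl⟩⟩
  have hKsub : K ⊆ Ici 0 ×ˢ (univ : Set ℝ) := by
    rintro p ⟨⟨t, y⟩, ⟨⟨ht0, _⟩, _⟩, rfl⟩
    exact ⟨ht0, trivial⟩
  have hZcont : ContinuousOn Z K := by
    apply ContinuousOn.mul
    · exact ((Real.continuous_exp.comp (continuous_const.mul continuous_fst))).continuousOn
    · apply ContinuousOn.sub
      · exact hucont.mono hKsub
      · apply ContinuousOn.mul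
        · exact (hρ.continuous.comp continuous_fst).continuousOn
        · exact (hψd.continuous.comp (continuous_snd.sub
            (continuous_const.mul continuous_fst))).continuousOn
  obtain ⟨p₀, hp₀K, hp₀min⟩ := hKcpt.exists_isMinOn hKne hZcont
  by_cases hsign : 0 ≤ Z p₀
  · -- minimum nonnegative: done
    intro t ht y hy
    have hmem : (t, s * t + y) ∈ K := ⟨(t, y), ⟨ht, hy⟩, rfl⟩
    have h1 : 0 ≤ Z (t, s * t + y) := le_trans hsign (hp₀min hmem)
    have h2 : s * t + y - s * t = y := by ring
    have h3 : 0 < exp (-γ * t) := exp_pos _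
    simp only [hZdef, h2] at h1
    nlinarith [h1]
  · exfalso
    push_neg at hsign
    obtain ⟨q₀, hq₀, hp₀eq⟩ := hp₀K
    obtain ⟨t₀, y₀⟩ := q₀
    have ht₀0 : 0 ≤ t₀ := hq₀.1.1
    have ht₀T : t₀ ≤ T := hq₀.1.2
    have hy₀0 : 0 ≤ y₀ := hq₀.2.1
    have hy₀L : y₀ ≤ L := hq₀.2.2
    set x₀ : ℝ := s * t₀ + y₀ with hx₀def
    have hp₀ : p₀ = (t₀, x₀) := by rw [← hp₀eq]
    rw [hp₀] at hsign hp₀min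
    have hyx : x₀ - s * t₀ = y₀ := by ring
    have hZval : Z (t₀, x₀) < 0 := hsign
    have hzneg : u t₀ x₀ - ρ t₀ * ψ y₀ < 0 := by
      have h3 : 0 < exp (-γ * t₀) := exp_pos _
      simp only [hZdef, hyx] at hZval
      nlinarith [hZval]
    -- t₀ > 0
    have ht₀pos : 0 < t₀ := by
      rcases ht₀0.lt_or_eq with h | h
      · exact h
      · exfalso
        have hx : x₀ = y₀ := by rw [hx₀def, ← h]; ring
        rw [← h, hx] at hzneg
        linarith [hinit y₀ ⟨hy₀0, hy₀L⟩]
    -- y₀ interior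
    have hy₀pos : 0 < y₀ := by
      rcases hy₀0.lt_or_eq with h | h
      · exact h
      · exfalso
        rw [← h, hψ0, mul_zero, sub_zero] at hzneg
        exact absurd hzneg (not_lt.mpr (hupos t₀ x₀ ht₀0))
    have hy₀lt : y₀ < L := by
      rcases hy₀L.lt_or_eq with h | h
      · exact h
      · exfalso
        rw [h, hψL, mul_zero, sub_zero] at hzneg
        exact absurd hzneg (not_lt.mpr (hupos t₀ x₀ ht₀0))
    set w : ℝ := min y₀ (L - y₀) with hwdef
    have hw : 0 < w := lt_min hy₀pos (by linarith)
    -- spatial local minimum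
    set g : ℝ → ℝ := fun x => u t₀ x - ρ t₀ * ψ (x - s * t₀) with hgdef
    have hgC2 : ContDiff ℝ 2 g := by
      apply (hux t₀ ht₀pos).sub
      exact contDiff_const.mul (hψ.comp (contDiff_id.sub contDiff_const))
    have hKmem : ∀ q : ℝ × ℝ, q.1 ∈ Icc (0:ℝ) T → q.2 - s * q.1 ∈ Icc (0:ℝ) L → q ∈ K := by
      rintro ⟨a, b⟩ h1 h2
      exact ⟨(a, b - s * a), ⟨h1, h2⟩, by simp⟩
    have hglocal : IsLocalMin g x₀ := by
      have hnb : Icc (x₀ - w) (x₀ + w) ∈ 𝓝 x₀ := Icc_mem_nhds (by linarith) (by linarith)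
      filter_upwards [hnb] with x hx
      have hmem : (t₀, x) ∈ K := by
        apply hKmem (t₀, x) ⟨ht₀0, ht₀T⟩
        simp only
        constructor
        · have := hx.1
          have h1 : w ≤ y₀ := min_le_left _ _
          simp only [hx₀def] at this ⊢
          linarith
        · have := hx.2
          have h1 : w ≤ L - y₀ := min_le_right _ _
          simp only [hx₀def] at this ⊢
          linarith
      have h1 : Z (t₀, x₀) ≤ Z (t₀, x) := hp₀min hmem
      have h3 : 0 < exp (-γ * t₀) := exp_pos _
      simp only [hZdef, hyx] at h1
      have := (mul_le_mul_iff_right₀ h3).mp h1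
      simpa [hgdef, hyx] using this
    have hsecond : 0 ≤ deriv (deriv g) x₀ := second_deriv_nonneg_of_isLocalMin hgC2 hglocal
    -- compute second derivative of g
    have huxC2 := hux t₀ ht₀pos
    have hux_d : Differentiable ℝ (u t₀) := huxC2.differentiable (by norm_num)
    have hux_d' : Differentiable ℝ (deriv (u t₀)) := by
      have := (contDiff_succ_iff_deriv (n := 1)).mp huxC2
      exact this.2.2.differentiable one_ne_zero
    have hg1 : deriv g = fun x => deriv (u t₀) x - ρ t₀ * deriv ψ (x - s * t₀) := by
      funext x
      have Hψ : HasDerivAt (fun y => ψ (y - s * t₀)) (deriv ψ (x - s * t₀)) x := by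
        exact ((hψd (x - s * t₀)).hasDerivAt.comp x ((hasDerivAt_id x).sub_const (s * t₀))).congr_deriv (mul_one _)
      have H := (hux_d x).hasDerivAt.sub (Hψ.const_mul (ρ t₀))
      rw [hgdef]
      exact H.deriv
    have hg2 : deriv (deriv g) x₀ = pdXX u t₀ x₀ - ρ t₀ * deriv (deriv ψ) y₀ := by
      rw [hg1]
      have Hψ' : HasDerivAt (fun y => deriv ψ (y - s * t₀)) (deriv (deriv ψ) (x₀ - s * t₀)) x₀ := by
        exact ((hψd' (x₀ - s * t₀)).hasDerivAt.comp x₀ ((hasDerivAt_id x₀).sub_const (s * t₀))).congr_deriv (mul_one _)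
      have H := (hux_d' x₀).hasDerivAt.sub (Hψ'.const_mul (ρ t₀))
      rw [hyx] at H
      simp only [pdXX]
      exact H.deriv
    -- temporal derivative at t₀
    set E : ℝ := exp (-γ * t₀) * ((pdT u t₀ x₀ - (deriv ρ t₀ * ψ y₀ + ρ t₀ * (deriv ψ y₀ * (-s))))
      + (-γ) * (u t₀ x₀ - ρ t₀ * ψ y₀)) with hEdef
    have hderiv : HasDerivAt (fun τ => Z (τ, x₀)) E t₀ := by
      have H1 : HasDerivAt (fun τ : ℝ => exp (-γ * τ)) (exp (-γ * t₀) * (-γ)) t₀ := by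
        have := ((hasDerivAt_id t₀).const_mul (-γ)).exp
        simpa using this
      have H2 : HasDerivAt (fun τ => u τ x₀) (pdT u t₀ x₀) t₀ :=
        (hut x₀ t₀ ht₀pos).hasDerivAt
      have Hin : HasDerivAt (fun τ : ℝ => x₀ - s * τ) (-s) t₀ := by
        have := (hasDerivAt_const t₀ x₀).sub ((hasDerivAt_id t₀).const_mul s)
        exact this.congr_deriv (by ring)
      have H3 : HasDerivAt (fun τ : ℝ => ψ (x₀ - s * τ)) (deriv ψ y₀ * (-s)) t₀ := by
        have := ((hψd _).hasDerivAt.comp t₀ Hin)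
        rw [hyx] at this
        exact this
      have H4 : HasDerivAt ρ (deriv ρ t₀) t₀ := (hρ t₀).hasDerivAt
      have H5 := H4.mul H3
      have H6 := H2.sub H5
      have H7 := H1.mul H6
      have : Z ∘ (fun τ => (τ, x₀)) = fun τ => exp (-γ * τ) * (u τ x₀ - ρ τ * ψ (x₀ - s * τ)) := by
        funext τ; simp [hZdef]
      rw [hEdef]
      have heq : exp (-γ * t₀) * (pdT u t₀ x₀ - (deriv ρ t₀ * ψ (x₀ - s * t₀) + ρ t₀ * (deriv ψ y₀ * (-s))))
          + exp (-γ * t₀) * (-γ) * (u t₀ x₀ - ρ t₀ * ψ (x₀ - s * t₀))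
          = exp (-γ * t₀) * ((pdT u t₀ x₀ - (deriv ρ t₀ * ψ y₀ + ρ t₀ * (deriv ψ y₀ * (-s))))
            + (-γ) * (u t₀ x₀ - ρ t₀ * ψ y₀)) := by rw [hyx]; ring
      rw [← heq]
      have H8 := H7
      rw [mul_comm] at H8
      refine H7.congr_deriv ?_
      simp only [Pi.sub_apply, Pi.mul_apply]
      ring
    -- E ≤ 0 from left-minimality in time
    have hδ0 : 0 < min t₀ (w / (|s| + 1)) := by
      apply lt_min ht₀pos
      positivity
    have hEle : E ≤ 0 := by
      apply deriv_nonpos_of_left_min hδ0 hderiv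
      intro τ hτ
      have hτ0 : 0 ≤ τ := by
        have := hτ.1
        have h1 : min t₀ (w / (|s| + 1)) ≤ t₀ := min_le_left _ _
        linarith
      have hτT : τ ≤ T := le_trans hτ.2 ht₀T
      have hmem : (τ, x₀) ∈ K := by
        apply hKmem (τ, x₀) ⟨hτ0, hτT⟩
        simp only
        have hs1 : |s * (t₀ - τ)| ≤ w := by
          rw [abs_mul]
          have h1 : |t₀ - τ| ≤ min t₀ (w / (|s| + 1)) := by
            rw [abs_of_nonneg (by linarith [hτ.2])]
            linarith [hτ.1]
          have h2 : min t₀ (w / (|s| + 1)) ≤ w / (|s| + 1) := min_le_right _ _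
          have h3 : |s| * |t₀ - τ| ≤ |s| * (w / (|s| + 1)) := by
            apply mul_le_mul_of_nonneg_left (le_trans h1 h2) (abs_nonneg s)
          have h4 : |s| * (w / (|s| + 1)) ≤ w := by
            have h5 : 0 < |s| + 1 := by positivity
            have h6 : |s| * (w / (|s| + 1)) = w * (|s| / (|s| + 1)) := by ring
            have h7 : |s| / (|s| + 1) ≤ 1 := (div_le_one h5).mpr (by linarith)
            rw [h6]
            exact mul_le_of_le_one_right hw.le h7
          linarith
        have hx : x₀ - s * τ = y₀ + s * (t₀ - τ) := by rw [hx₀def]; ring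
        rw [hx]
        have := abs_le.mp hs1
        constructor
        · have h1 : w ≤ y₀ := min_le_left _ _
          linarith [this.1]
        · have h1 : w ≤ L - y₀ := min_le_right _ _
          linarith [this.2]
      exact hp₀min hmem
    -- contradiction
    have hsubineq := hsub t₀ ⟨ht₀0, ht₀T⟩ y₀ ⟨hy₀0, hy₀L⟩
    have hsupineq := hsup t₀ x₀ ht₀pos
    have hexppos : 0 < exp (-γ * t₀) := exp_pos _
    have hupos' : 0 ≤ u t₀ x₀ := hupos t₀ x₀ ht₀0
    have hvpos : 0 ≤ ρ t₀ * ψ y₀ := mul_nonneg (hρ0 t₀) (hψrange y₀ ⟨hy₀0, hy₀L⟩)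
    -- from hsecond and hg2 : pdXX u t₀ x₀ ≥ ρ t₀ * (deriv (deriv ψ)) y₀
    rw [hg2] at hsecond
    -- arithmetic contradiction
    clear hderiv hZcont hp₀min hucont hsub hsup hinit hglocal hKmem hKcpt hKne hKsub hg1 hg2 hgC2
    have hEpos : 0 < E := by
      rw [hEdef]
      apply mul_pos hexppos
      set U := u t₀ x₀
      set V := ρ t₀ * ψ y₀
      have hDD : d * (ρ t₀ * deriv (deriv ψ) y₀) ≤ d * pdXX u t₀ x₀ := by nlinarith [hsecond, hd.le]
      have h2 : d * (ρ t₀ * deriv (deriv ψ) y₀) + r * U * (1 - U) ≤ pdT u t₀ x₀ := by linarith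
      have hfact : r * U * (1 - U) - r * V * (1 - V) - γ * (U - V)
          = (U - V) * (r * (1 - U - V) - γ) := by rw [hγdef]; ring
      have hlast : 0 < (U - V) * (r * (1 - U - V) - γ) := by
        have h9 : U - V < 0 := hzneg
        have h10 : r * (1 - U - V) - γ < 0 := by
          rw [hγdef]
          nlinarith [hupos', hvpos, hr]
        exact mul_pos_of_neg_of_neg h9 h10
      have hkey : r * U * (1 - U) - r * V * (1 - V) - γ * (U - V) > 0 := by
        rw [hfact]; exact hlast
      have hsub' : deriv ρ t₀ * ψ y₀ + ρ t₀ * (deriv ψ y₀ * (-s))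
          ≤ d * (ρ t₀ * deriv (deriv ψ) y₀) + r * V * (1 - V) := by nlinarith [hsubineq]
      linarith
    linarith


lemma hasDerivAt_bump (η α β : ℝ) (y : ℝ) :
    HasDerivAt (fun y => η * (Real.exp (-(α*y)) * Real.sin (β*y)))
      (η * (Real.exp (-(α*y)) * (β * Real.cos (β*y) - α * Real.sin (β*y)))) y := by
  have h1 : HasDerivAt (fun y : ℝ => -(α*y)) (-α) y := by
    exact (((hasDerivAt_id y).const_mul α).neg).congr_deriv (by ring)
  have h2 := h1.exp
  have h3 : HasDerivAt (fun y : ℝ => β*y) β y := by simpa using (hasDerivAt_id y).const_mul β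
  have h4 := h3.sin
  have h5 := (h2.mul h4).const_mul η
  refine h5.congr_deriv ?_
  ring

lemma hasDerivAt_bump' (η α β : ℝ) (y : ℝ) :
    HasDerivAt (fun y => η * (Real.exp (-(α*y)) * (β * Real.cos (β*y) - α * Real.sin (β*y))))
      (η * (Real.exp (-(α*y)) * ((α^2 - β^2) * Real.sin (β*y) - 2*α*β * Real.cos (β*y)))) y := by
  have h1 : HasDerivAt (fun y : ℝ => -(α*y)) (-α) y := by
    exact (((hasDerivAt_id y).const_mul α).neg).congr_deriv (by ring)
  have h2 := h1.exp
  have h3 : HasDerivAt (fun y : ℝ => β*y) β y := by simpa using (hasDerivAt_id y).const_mul β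
  have h4 := h3.sin
  have h5 := h3.cos
  have h6 := ((h5.const_mul β).sub (h4.const_mul α))
  have h7 := (h2.mul h6).const_mul η
  refine h7.congr_deriv ?_
  simp only [Pi.sub_apply]
  ring

lemma deriv_bump (η α β : ℝ) :
    deriv (fun y => η * (Real.exp (-(α*y)) * Real.sin (β*y)))
      = fun y => η * (Real.exp (-(α*y)) * (β * Real.cos (β*y) - α * Real.sin (β*y))) :=
  funext fun y => (hasDerivAt_bump η α β y).deriv

lemma deriv2_bump (η α β : ℝ) :
    deriv (deriv (fun y => η * (Real.exp (-(α*y)) * Real.sin (β*y))))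
      = fun y => η * (Real.exp (-(α*y)) * ((α^2 - β^2) * Real.sin (β*y) - 2*α*β * Real.cos (β*y))) := by
  rw [deriv_bump]
  exact funext fun y => (hasDerivAt_bump' η α β y).deriv

lemma contDiff_bump (η α β : ℝ) :
    ContDiff ℝ 2 (fun y => η * (Real.exp (-(α*y)) * Real.sin (β*y))) := by
  apply ContDiff.mul contDiff_const
  apply ContDiff.mul
  · exact Real.contDiff_exp.comp ((contDiff_const.mul contDiff_id).neg)
  · exact Real.contDiff_sin.comp (contDiff_const.mul contDiff_id)

lemma hasDerivAt_sinmul (μ : ℝ) (y : ℝ) :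
    HasDerivAt (fun y => Real.sin (μ*y)) (μ * Real.cos (μ*y)) y := by
  have h3 : HasDerivAt (fun y : ℝ => μ*y) μ y := by simpa using (hasDerivAt_id y).const_mul μ
  have := h3.sin
  convert this using 1; ring

lemma deriv_sinmul (μ : ℝ) :
    deriv (fun y => Real.sin (μ*y)) = fun y => μ * Real.cos (μ*y) :=
  funext fun y => (hasDerivAt_sinmul μ y).deriv

lemma deriv2_sinmul (μ : ℝ) :
    deriv (deriv (fun y => Real.sin (μ*y))) = fun y => -(μ^2) * Real.sin (μ*y) := by
  rw [deriv_sinmul]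
  funext y
  have h3 : HasDerivAt (fun y : ℝ => μ*y) μ y := by simpa using (hasDerivAt_id y).const_mul μ
  have := (h3.cos.const_mul μ)
  rw [this.deriv]
  ring

lemma contDiff_sinmul (μ : ℝ) : ContDiff ℝ 2 (fun y => Real.sin (μ*y)) :=
  Real.contDiff_sin.comp (contDiff_const.mul contDiff_id)

-- logistic function
lemma logistic_hasDerivAt (a r K : ℝ) (ha : 0 < a) (hr : 0 < r) (hK : 0 < K) (t : ℝ) :
    HasDerivAt (fun t => a / (r + K * Real.exp (-(a*t))))
      ((a / (r + K * Real.exp (-(a*t)))) * (a - r * (a / (r + K * Real.exp (-(a*t)))))) t := by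
  have hD : 0 < r + K * Real.exp (-(a*t)) := by positivity
  have h1 : HasDerivAt (fun t : ℝ => -(a*t)) (-a) t := by
    exact (((hasDerivAt_id t).const_mul a).neg).congr_deriv (by ring)
  have h2 := (h1.exp.const_mul K).const_add r
  have h3 := (h2.inv hD.ne').const_mul a
  have h4 : (fun t : ℝ => a * (r + K * Real.exp (-(a*t)))⁻¹)
      = fun t => a / (r + K * Real.exp (-(a*t))) := by
    funext t; rw [div_eq_mul_inv]
  rw [← h4]
  refine h3.congr_deriv ?_
  field_simp
  ring

lemma logistic_pos (a r K : ℝ) (ha : 0 < a) (hr : 0 < r) (hK : 0 < K) (t : ℝ) :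
    0 < a / (r + K * Real.exp (-(a*t))) := by positivity

lemma logistic_le (a r K : ℝ) (ha : 0 < a) (hr : 0 < r) (hK : 0 < K) (t : ℝ) :
    a / (r + K * Real.exp (-(a*t))) ≤ a / r := by
  apply div_le_div_of_nonneg_left ha.le hr
  nlinarith [Real.exp_pos (-(a*t)), hK]



/-- bounded nonneg supersolution of KPP. -/
structure Super (d r : ℝ) (u : ℝ → ℝ → ℝ) : Prop where
  cont : ContinuousOn (fun p : ℝ × ℝ => u p.1 p.2) (Ici 0 ×ˢ (univ : Set ℝ))
  difft : ∀ x t : ℝ, 0 < t → DifferentiableAt ℝ (fun τ => u τ x) t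
  contx : ∀ t : ℝ, 0 < t → ContDiff ℝ 2 (u t)
  supineq : ∀ t x : ℝ, 0 < t → d * pdXX u t x + r * u t x * (1 - u t x) ≤ pdT u t x
  pos : ∀ t x : ℝ, 0 ≤ t → 0 ≤ u t x

lemma Super.shift {d r : ℝ} {u : ℝ → ℝ → ℝ} (h : Super d r u) (T₀ ξ : ℝ) (hT₀ : 0 ≤ T₀) :
    Super d r (fun t x => u (t + T₀) (x + ξ)) := by
  constructor
  · have hmap : MapsTo (fun p : ℝ × ℝ => (p.1 + T₀, p.2 + ξ)) (Ici 0 ×ˢ (univ : Set ℝ))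
        (Ici 0 ×ˢ (univ : Set ℝ)) := by
      rintro ⟨t, x⟩ ⟨ht, -⟩
      exact ⟨by simp at ht ⊢; linarith, trivial⟩
    exact h.cont.comp ((continuous_fst.add continuous_const).prodMk
      (continuous_snd.add continuous_const)).continuousOn hmap
  · intro x t ht
    have h1 := h.difft (x + ξ) (t + T₀) (by linarith)
    exact h1.comp t ((differentiable_id.add_const T₀) t)
  · intro t ht
    exact (h.contx (t + T₀) (by linarith)).comp (contDiff_id.add contDiff_const)
  · intro t x ht
    have hpdT : pdT (fun t x => u (t + T₀) (x + ξ)) t x = pdT u (t + T₀) (x + ξ) := by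
      simp only [pdT]
      exact deriv_comp_add_const (fun τ => u τ (x + ξ)) T₀ t
    have hin : deriv (fun y => u (t + T₀) (y + ξ)) = fun y => deriv (u (t + T₀)) (y + ξ) :=
      funext fun y => deriv_comp_add_const (u (t + T₀)) ξ y
    have hpdXX : pdXX (fun t x => u (t + T₀) (x + ξ)) t x = pdXX u (t + T₀) (x + ξ) := by
      simp only [pdXX, hin]
      exact deriv_comp_add_const (deriv (u (t + T₀))) ξ x
    rw [hpdT, hpdXX]
    exact h.supineq (t + T₀) (x + ξ) (by linarith)
  · intro t x ht
    exact h.pos (t + T₀) (x + ξ) (by linarith)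

/-- Step 1, for a single speed `s`: the moving bump stays below `u`. -/
lemma step1_pointwise (d r ε s α β η : ℝ) (hd : 0 < d) (hr : 0 < r)
    (hε0 : 0 < ε) (hε1 : ε < 1) (hβ : 0 < β) (hη : 0 < η)
    (hdisp : d * β^2 + d * α^2 = r * (1 - ε))
    (hα : 2 * d * α = s)
    (u : ℝ → ℝ → ℝ) (hu : Super d r u)
    (hsmall : ∀ y ∈ Icc 0 (π/β), η * (Real.exp (-(α*y)) * Real.sin (β*y)) ≤ ε)
    (hinit : ∀ y ∈ Icc 0 (π/β), η * (Real.exp (-(α*y)) * Real.sin (β*y)) ≤ u 0 y) :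
    ∀ t : ℝ, 0 ≤ t → η * Real.exp (-(α*(π/(2*β)))) ≤ u t (s * t + π/(2*β)) := by
  intro t ht
  set W : ℝ → ℝ := fun y => η * (Real.exp (-(α*y)) * Real.sin (β*y)) with hW
  set L : ℝ := π / β with hLdef
  have hL : 0 < L := div_pos Real.pi_pos hβ
  have hWnn : ∀ y ∈ Icc (0:ℝ) L, 0 ≤ W y := by
    intro y hy
    apply mul_nonneg hη.le
    apply mul_nonneg (Real.exp_pos _).le
    apply Real.sin_nonneg_of_nonneg_of_le_pi
    · exact mul_nonneg hβ.le hy.1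
    · calc β * y ≤ β * L := by nlinarith [hy.2]
        _ = π := by rw [hLdef]; field_simp
  have hode : ∀ y : ℝ, d * deriv (deriv W) y + s * deriv W y + r * (1 - ε) * W y = 0 := by
    intro y
    rw [hW, deriv2_bump, deriv_bump]
    simp only
    have h1 : d * (α^2 - β^2) - s * α + r * (1-ε) = 0 := by linear_combination α * hα - hdisp
    have h2 : -(2*d*α*β) + s * β = 0 := by linear_combination -(β * hα)
    linear_combination (η * Real.exp (-(α*y)) * Real.sin (β*y)) * h1
      + (η * Real.exp (-(α*y)) * Real.cos (β*y)) * h2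
  have key := comparison d r s L t hd hr hL ht u hu.cont hu.difft hu.contx hu.supineq hu.pos
    (fun _ => 1) W (differentiable_const 1) (contDiff_bump η α β)
    (fun _ => zero_le_one)
    hWnn
    (by rw [hW]; simp)
    (by rw [hW]; simp only; rw [hLdef]; rw [mul_div_cancel₀ _ hβ.ne', Real.sin_pi]; ring)
    ?_ ?_
  · have hmid : π/(2*β) ∈ Icc (0:ℝ) L := by
      constructor
      · positivity
      · rw [hLdef]; rw [div_le_div_iff₀ (by positivity) hβ]; nlinarith [Real.pi_pos]
    have := key t ⟨ht, le_rfl⟩ (π/(2*β)) hmid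
    simp only [one_mul] at this
    calc η * Real.exp (-(α*(π/(2*β)))) = W (π/(2*β)) := by
          rw [hW]; simp only
          have : β * (π/(2*β)) = π/2 := by field_simp
          rw [this, Real.sin_pi_div_two, mul_one]
        _ ≤ u t (s * t + π/(2*β)) := this
  · -- subsolution inequality
    intro τ hτ y hy
    have hd0 : deriv (fun _ : ℝ => (1:ℝ)) τ = 0 := deriv_const τ 1
    rw [hd0, zero_mul, one_mul, one_mul, one_mul]
    have h1 := hode y
    have h2 : d * deriv (deriv W) y + s * deriv W y = -(r * (1-ε) * W y) := by linarith
    have h3 := hWnn y hy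
    have h4 : W y ≤ ε := hsmall y hy
    nlinarith [h2, mul_nonneg (mul_nonneg hr.le h3) (sub_nonneg.2 h4)]
  · intro y hy
    simpa using hinit y hy

/-- Step 2: lifting a uniform lower bound `δ` on an interval of radius `R` to
almost `a/r` at the center, after time `σ`. -/
lemma step2_core (d r R δ σ : ℝ) (hd : 0 < d) (hr : 0 < r) (hR : 0 < R) (hσ : 0 ≤ σ)
    (hδ0 : 0 < δ)
    (ha : 0 < r - d * (π/(2*R))^2)
    (hδa : δ < (r - d * (π/(2*R))^2) / r)
    (u : ℝ → ℝ → ℝ) (hu : Super d r u)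
    (hinit : ∀ y ∈ Icc (0:ℝ) (2*R), δ ≤ u 0 y) :
    (r - d * (π/(2*R))^2) / (r + ((r - d * (π/(2*R))^2)/δ - r) * Real.exp (-((r - d * (π/(2*R))^2)*σ)))
      ≤ u σ R := by
  set μ : ℝ := π/(2*R) with hμdef
  set a : ℝ := r - d * μ^2 with hadef
  set K : ℝ := a/δ - r with hKdef
  have hμ : 0 < μ := by positivity
  have hK : 0 < K := by
    rw [hKdef]
    have h1 : δ * r < a := (lt_div_iff₀ hr).mp hδa
    have h2 : r < a/δ := (lt_div_iff₀ hδ0).mpr (by linarith)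
    linarith
  set ρ : ℝ → ℝ := fun t => a / (r + K * Real.exp (-(a*t))) with hρdef
  have hρpos : ∀ t, 0 < ρ t := by
    intro t; rw [hρdef]; positivity
  have hρder : ∀ t, HasDerivAt ρ (ρ t * (a - r * ρ t)) t :=
    fun t => logistic_hasDerivAt a r K ha hr hK t
  have hρle : ∀ t, ρ t ≤ a / r := by
    intro t
    rw [hρdef]
    apply div_le_div_of_nonneg_left ha.le hr
    nlinarith [Real.exp_pos (-(a*t)), hK]
  have hρ0 : ρ 0 = δ := by
    rw [hρdef]
    simp only [mul_zero, neg_zero, Real.exp_zero, mul_one]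
    rw [hKdef]
    field_simp
    rw [show r*δ + (a - r*δ) = a from by ring, div_self ha.ne']
  set ψ : ℝ → ℝ := fun y => Real.sin (μ*y) with hψdef
  have hψnn : ∀ y ∈ Icc (0:ℝ) (2*R), 0 ≤ ψ y := by
    intro y hy
    apply Real.sin_nonneg_of_nonneg_of_le_pi (mul_nonneg hμ.le hy.1)
    calc μ * y ≤ μ * (2*R) := by nlinarith [hy.2]
      _ = π := by rw [hμdef]; field_simp
  have hψle1 : ∀ y, ψ y ≤ 1 := fun y => Real.sin_le_one _
  have key := comparison d r 0 (2*R) σ hd hr (by positivity) hσ u hu.cont hu.difft hu.contx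
    hu.supineq hu.pos ρ ψ (fun t => (hρder t).differentiableAt) (contDiff_sinmul μ)
    (fun t => (hρpos t).le) hψnn
    (by rw [hψdef]; simp)
    (by rw [hψdef]; simp only; rw [hμdef]; rw [show π/(2*R) * (2*R) = π by field_simp]; exact Real.sin_pi)
    ?_ ?_
  · have hmid : R ∈ Icc (0:ℝ) (2*R) := ⟨hR.le, by linarith⟩
    have h1 := key σ ⟨hσ, le_rfl⟩ R hmid
    have h2 : ψ R = 1 := by
      rw [hψdef]; simp only
      rw [show μ * R = π/2 by rw [hμdef]; field_simp]
      exact Real.sin_pi_div_two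
    rw [h2, mul_one] at h1
    rw [zero_mul, zero_add] at h1
    exact h1
  · intro t ht y hy
    have hder : deriv ρ t = ρ t * (a - r * ρ t) := (hρder t).deriv
    have hψ2 : deriv (deriv ψ) y = -(μ^2) * Real.sin (μ*y) := by
      rw [hψdef, deriv2_sinmul]
    rw [hder, hψ2]
    have h3 := hψnn y hy
    have h4 := hψle1 y
    have h5 := hρpos t
    have h6 := (hρle t)
    -- need: ρ(a-rρ)ψ ≤ d ρ (-(μ²) sin(μ y)) + 0 + r ρψ(1-ρψ)
    -- i.e. 0 ≤ r ρ² ψ (1 - ψ), using a = r - dμ²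
    rw [zero_mul, add_zero]
    have hsin : Real.sin (μ*y) = ψ y := rfl
    rw [hsin]
    have hexpand : d * (ρ t * (-(μ^2) * ψ y)) + r * (ρ t * ψ y) * (1 - ρ t * ψ y)
        - ρ t * (a - r * ρ t) * ψ y = r * (ρ t * ρ t * (ψ y * (1 - ψ y))) := by
      rw [hadef]; ring
    nlinarith [hexpand, mul_nonneg (mul_nonneg hr.le (mul_nonneg h5.le h5.le))
      (mul_nonneg h3 (sub_nonneg.2 h4))]
  · intro y hy
    rw [hρ0]
    calc δ * ψ y ≤ δ * 1 := by nlinarith [hψle1 y, hψnn y hy, hδ0]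
      _ ≤ u 0 y := by rw [mul_one]; exact hinit y hy

set_option maxHeartbeats 1000000 in
lemma step1_uniform (d r c : ℝ) (hd : 0 < d) (hr : 0 < r) (hc0 : 0 < c) (hsq : c^2 < 4*d*r)
    (u : ℝ → ℝ → ℝ) (hu : Super d r u)
    (h0pos : ∀ x, 0 < u 0 x) (h0cont : Continuous (u 0)) :
    ∃ δ > 0, ∃ c₂ > c, ∃ T₁ > 0, ∀ t ≥ T₁, ∀ x : ℝ, |x| ≤ c₂ * t → δ ≤ u t x := by
  have hπ := Real.pi_pos
  set ε : ℝ := (4*d*r - c^2)/(8*d*r) with hεdef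
  have hε0 : 0 < ε := by rw [hεdef]; exact div_pos (by linarith) (by positivity)
  have hε1 : ε < 1 := by
    rw [hεdef, div_lt_one (by positivity)]
    nlinarith [sq_nonneg c]
  set k : ℝ := r * (1 - ε) with hkdef
  have hk0 : 0 < k := by rw [hkdef]; nlinarith
  have h4dk : 4*d*k = 2*d*r + c^2/2 := by
    rw [hkdef, hεdef]; field_simp; ring
  have hck : c^2 < 4*d*k := by rw [h4dk]; nlinarith
  set c₁ : ℝ := Real.sqrt ((c^2 + 4*d*k)/2) with hc₁def
  have hc₁sq : c₁^2 = (c^2 + 4*d*k)/2 := Real.sq_sqrt (by positivity)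
  have hc₁pos : 0 < c₁ := Real.sqrt_pos.mpr (by positivity)
  have hcc₁ : c < c₁ := by nlinarith [hc₁sq, hc₁pos, hck]
  have hc₁k : c₁^2 < 4*d*k := by rw [hc₁sq]; nlinarith
  set c₂ : ℝ := (c + c₁)/2 with hc₂def
  have hcc₂ : c < c₂ := by rw [hc₂def]; linarith
  have hc₂c₁ : c₂ < c₁ := by rw [hc₂def]; linarith
  set D : ℝ := 4*d*k - c₁^2 with hDdef
  have hD0 : 0 < D := by rw [hDdef]; linarith
  have hsD : 0 < Real.sqrt D := Real.sqrt_pos.mpr hD0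
  set Lmax : ℝ := 2*d*π/Real.sqrt D with hLmaxdef
  have hLmax0 : 0 < Lmax := by rw [hLmaxdef]; positivity
  set A : ℝ := c₁/(2*d) with hAdef
  have hA0 : 0 < A := by rw [hAdef]; positivity
  -- minimum of initial data on [0, Lmax]
  obtain ⟨y₀, hy₀mem, hy₀min⟩ := isCompact_Icc.exists_isMinOn (nonempty_Icc.mpr hLmax0.le)
    (h0cont.continuousOn (s := Icc 0 Lmax))
  set m : ℝ := u 0 y₀ with hmdef
  have hm0 : 0 < m := h0pos y₀
  set e : ℝ := min ε m with hedef
  have he0 : 0 < e := lt_min hε0 hm0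
  set η : ℝ := e * Real.exp (-(A*Lmax)) with hηdef
  have hη0 : 0 < η := by rw [hηdef]; positivity
  set δ : ℝ := η * Real.exp (-(A*Lmax)) with hδdef
  have hδ0 : 0 < δ := by rw [hδdef]; positivity
  -- pointwise bound for each speed s
  have hpoint : ∀ s ∈ Icc (-c₁) c₁, ∀ t : ℝ, 0 ≤ t →
      δ ≤ u t (s * t + d*π/Real.sqrt (4*d*k - s^2)) := by
    intro s hs t ht
    have hs2 : s^2 ≤ c₁^2 := sq_le_sq' hs.1 hs.2
    have hEs : 0 < 4*d*k - s^2 := by linarith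
    have hsEs : 0 < Real.sqrt (4*d*k - s^2) := Real.sqrt_pos.mpr hEs
    have hEsD : D ≤ 4*d*k - s^2 := by rw [hDdef]; linarith
    have hsEsD : Real.sqrt D ≤ Real.sqrt (4*d*k - s^2) := Real.sqrt_le_sqrt hEsD
    set β : ℝ := Real.sqrt (4*d*k - s^2)/(2*d) with hβdef
    have hβ0 : 0 < β := by rw [hβdef]; positivity
    set α : ℝ := s/(2*d) with hαdef
    have hαabs : |α| ≤ A := by
      rw [hαdef, hAdef, abs_div, abs_of_pos (by positivity : (0:ℝ) < 2*d)]
      gcongr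
      exact abs_le.mpr hs
    have hL : π/β = 2*d*π/Real.sqrt (4*d*k - s^2) := by
      rw [hβdef, div_div_eq_mul_div]; ring
    have hLle : π/β ≤ Lmax := by
      rw [hL, hLmaxdef]
      apply div_le_div_of_nonneg_left (by positivity) hsD hsEsD
    have hdisp : d * β^2 + d * α^2 = k := by
      rw [hβdef, hαdef, div_pow, div_pow, Real.sq_sqrt hEs.le]
      field_simp
      ring
    have hα : 2 * d * α = s := by rw [hαdef]; field_simp
    have hWle : ∀ y ∈ Icc 0 (π/β), η * (Real.exp (-(α*y)) * Real.sin (β*y)) ≤ e := by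
      intro y hy
      have h1 : Real.sin (β*y) ≤ 1 := Real.sin_le_one _
      have h2 : -(α*y) ≤ A*Lmax := by
        have h3 : α*y ≥ -(A*Lmax) := by
          have h4 : |α*y| ≤ A*Lmax := by
            rw [abs_mul]
            apply mul_le_mul hαabs ?_ (abs_nonneg y) hA0.le
            rw [abs_of_nonneg hy.1]
            linarith [hy.2]
          linarith [abs_le.mp h4]
        linarith
      have h5 : Real.exp (-(α*y)) ≤ Real.exp (A*Lmax) := Real.exp_le_exp.mpr h2
      have h6 : η * (Real.exp (-(α*y)) * Real.sin (β*y)) ≤ η * Real.exp (A*Lmax) := by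
        apply mul_le_mul_of_nonneg_left ?_ hη0.le
        calc Real.exp (-(α*y)) * Real.sin (β*y) ≤ Real.exp (-(α*y)) * 1 := by
              apply mul_le_mul_of_nonneg_left h1 (Real.exp_pos _).le
          _ = Real.exp (-(α*y)) := mul_one _
          _ ≤ Real.exp (A*Lmax) := h5
      calc η * (Real.exp (-(α*y)) * Real.sin (β*y)) ≤ η * Real.exp (A*Lmax) := h6
        _ = e * (Real.exp (-(A*Lmax)) * Real.exp (A*Lmax)) := by rw [hηdef]; ring
        _ = e := by rw [← Real.exp_add]; simp
    have hkey := step1_pointwise d r ε s α β η hd hr hε0 hε1 hβ0 hη0 hdisp hα u hu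
      (fun y hy => le_trans (hWle y hy) (min_le_left _ _))
      (fun y hy => by
        have h7 := hWle y hy
        have h8 : e ≤ m := min_le_right _ _
        have h9 : m ≤ u 0 y := hy₀min ⟨hy.1, le_trans hy.2 hLle⟩
        linarith)
      t ht
    have hmm : π/(2*β) = d*π/Real.sqrt (4*d*k - s^2) := by
      rw [hβdef]; field_simp
    rw [hmm] at hkey
    refine le_trans ?_ hkey
    rw [hδdef]
    apply mul_le_mul_of_nonneg_left ?_ hη0.le
    apply Real.exp_le_exp.mpr
    have h10 : α * (d*π/Real.sqrt (4*d*k - s^2)) ≤ A*Lmax := by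
      have h11 : |α * (d*π/Real.sqrt (4*d*k - s^2))| ≤ A * Lmax := by
        rw [abs_mul]
        apply mul_le_mul hαabs ?_ (abs_nonneg _) hA0.le
        rw [abs_of_pos (by positivity)]
        rw [hLmaxdef]
        calc d*π/Real.sqrt (4*d*k - s^2) ≤ d*π/Real.sqrt D := by
              apply div_le_div_of_nonneg_left (by positivity) hsD hsEsD
          _ ≤ 2*d*π/Real.sqrt D := by
              gcongr
              linarith [mul_pos hd hπ]
      linarith [abs_le.mp h11]
    linarith
  -- IVT sweep
  set T₁ : ℝ := (d*π/Real.sqrt D) / (c₁ - c₂) with hT₁def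
  have hT₁0 : 0 < T₁ := by rw [hT₁def]; exact div_pos (by positivity) (by linarith)
  refine ⟨δ, hδ0, c₂, hcc₂, T₁, hT₁0, ?_⟩
  intro t ht x hx
  have ht0 : 0 < t := lt_of_lt_of_le hT₁0 ht
  set G : ℝ → ℝ := fun s => s * t + d*π/Real.sqrt (4*d*k - s^2) with hGdef
  have hGcont : ContinuousOn G (Icc (-c₁) c₁) := by
    apply ContinuousOn.add
    · exact (continuous_id.mul continuous_const).continuousOn
    · apply ContinuousOn.div continuousOn_const
      · exact (Real.continuous_sqrt.comp (continuous_const.sub (continuous_pow 2))).continuousOn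
      · intro s hs
        have hs2 : s^2 ≤ c₁^2 := sq_le_sq' hs.1 hs.2
        exact (Real.sqrt_pos.mpr (by linarith)).ne'
  have hGm : G (-c₁) ≤ -(c₂*t) := by
    rw [hGdef]
    simp only [neg_sq]
    have h1 : d*π/Real.sqrt (4*d*k - c₁^2) = d*π/Real.sqrt D := by rw [hDdef]
    rw [h1]
    have h2 : d*π/Real.sqrt D ≤ (c₁ - c₂) * t := by
      rw [hT₁def] at ht
      calc d*π/Real.sqrt D = ((d*π/Real.sqrt D)/(c₁ - c₂)) * (c₁ - c₂) :=
            (div_mul_cancel₀ _ (by linarith : c₁ - c₂ ≠ 0)).symm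
        _ ≤ t * (c₁ - c₂) := by
            apply mul_le_mul_of_nonneg_right ht (by linarith)
        _ = (c₁ - c₂) * t := mul_comm _ _
    linarith [h2]
  have hGp : c₂*t ≤ G c₁ := by
    rw [hGdef]
    have h1 : 0 < d*π/Real.sqrt (4*d*k - c₁^2) := by
      rw [← hDdef]; positivity
    have h2 : c₂ * t ≤ c₁ * t := mul_le_mul_of_nonneg_right hc₂c₁.le ht0.le
    linarith
  have hxmem : x ∈ Icc (G (-c₁)) (G c₁) := by
    have := abs_le.mp hx
    exact ⟨le_trans hGm (by linarith [this.1]), le_trans (by linarith [this.2]) hGp⟩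
  obtain ⟨s₀, hs₀mem, hs₀⟩ := intermediate_value_Icc (by linarith : -c₁ ≤ c₁) hGcont hxmem
  have := hpoint s₀ hs₀mem t ht0.le
  rw [hGdef] at hs₀
  simp only at hs₀
  rw [hs₀] at this
  exact this

set_option maxHeartbeats 1000000 in
lemma cone_lift (d r c c₂ δ T₁ : ℝ) (hd : 0 < d) (hr : 0 < r) (hc0 : 0 < c)
    (hcc₂ : c < c₂) (hδ0 : 0 < δ) (hT₁0 : 0 < T₁)
    (u : ℝ → ℝ → ℝ) (hu : Super d r u)
    (hstep1 : ∀ t ≥ T₁, ∀ x : ℝ, |x| ≤ c₂ * t → δ ≤ u t x)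
    (ε' : ℝ) (hε'0 : 0 < ε') (hε'1 : ε' < 1) :
    ∃ T₂ : ℝ, ∀ t ≥ T₂, ∀ x : ℝ, |x| ≤ c * t → 1 - ε' ≤ u t x := by
  have hπ := Real.pi_pos
  obtain ⟨R, hR0, hμbound⟩ : ∃ R : ℝ, 0 < R ∧ d * (π/(2*R))^2 ≤ r*ε'/2 := by
    refine ⟨max 1 (π * Real.sqrt (d/(2*r*ε'))), lt_of_lt_of_le one_pos (le_max_left _ _), ?_⟩
    set R : ℝ := max 1 (π * Real.sqrt (d/(2*r*ε'))) with hRdef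
    have hR0 : (0:ℝ) < R := lt_of_lt_of_le one_pos (le_max_left _ _)
    have hq : (0:ℝ) < d/(2*r*ε') := by positivity
    have hRge : π * Real.sqrt (d/(2*r*ε')) ≤ R := le_max_right _ _
    have hRsq : π^2 * (d/(2*r*ε')) ≤ R^2 := by
      have h1 : (π * Real.sqrt (d/(2*r*ε')))^2 ≤ R^2 :=
        pow_le_pow_left₀ (by positivity) hRge 2
      rw [mul_pow, Real.sq_sqrt hq.le] at h1
      exact h1
    have h2 : d*π^2 ≤ 2*r*ε'*R^2 := by
      have h3 := mul_le_mul_of_nonneg_left hRsq (by positivity : (0:ℝ) ≤ 2*r*ε')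
      calc d*π^2 = 2*r*ε'*(π^2 * (d/(2*r*ε'))) := by field_simp
        _ ≤ 2*r*ε'*R^2 := h3
    rw [div_pow, ← mul_div_assoc, div_le_iff₀ (by positivity : (0:ℝ) < (2*R)^2)]
    calc d * π^2 ≤ 2*r*ε'*R^2 := h2
      _ = r*ε'/2 * (2*R)^2 := by ring
  obtain ⟨a, hadef, ha0, har⟩ : ∃ a : ℝ, a = r - d*(π/(2*R))^2 ∧ 0 < a ∧ r*(1-ε'/2) ≤ a := by
    refine ⟨r - d*(π/(2*R))^2, rfl, ?_, ?_⟩ <;> nlinarith [hμbound, hr, hε'0, hε'1]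
  obtain ⟨δ', hδ'0, hδ'δ, hδ'a⟩ : ∃ δ' : ℝ, 0 < δ' ∧ δ' ≤ δ ∧ δ' < a/r := by
    refine ⟨min δ (a/(2*r)), lt_min hδ0 (by positivity), min_le_left _ _, ?_⟩
    calc min δ (a/(2*r)) ≤ a/(2*r) := min_le_right _ _
      _ < a/r := by apply div_lt_div_of_pos_left ha0 hr; linarith
  obtain ⟨K, hKdef, hK0⟩ : ∃ K : ℝ, K = a/δ' - r ∧ 0 < K := by
    refine ⟨a/δ' - r, rfl, ?_⟩
    have h1 : δ' * r < a := (lt_div_iff₀ hr).mp hδ'a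
    have h2 : r < a/δ' := (lt_div_iff₀ hδ'0).mpr (by linarith)
    linarith
  obtain ⟨σ, hσ0, hKe⟩ : ∃ σ : ℝ, 0 ≤ σ ∧ K * Real.exp (-(a*σ)) ≤ r*ε'/2 := by
    refine ⟨max 0 ((1/a) * Real.log (2*K/(r*ε'))), le_max_left _ _, ?_⟩
    set σ : ℝ := max 0 ((1/a) * Real.log (2*K/(r*ε'))) with hσdef
    have hσ0 : 0 ≤ σ := le_max_left _ _
    by_cases hq : 2*K/(r*ε') ≤ 1
    · have h1 : K ≤ r*ε'/2 := by
        rw [div_le_one (by positivity)] at hq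
        linarith
      have h2 : Real.exp (-(a*σ)) ≤ 1 :=
        Real.exp_le_one_iff.mpr (neg_nonpos.mpr (mul_nonneg ha0.le hσ0))
      calc K * Real.exp (-(a*σ)) ≤ K * 1 := mul_le_mul_of_nonneg_left h2 hK0.le
        _ = K := mul_one _
        _ ≤ r*ε'/2 := h1
    · push_neg at hq
      have hq0 : 0 < 2*K/(r*ε') := by positivity
      have h3 : (1/a) * Real.log (2*K/(r*ε')) ≤ σ := le_max_right _ _
      have h4 : Real.log (2*K/(r*ε')) ≤ a * σ := by
        calc Real.log (2*K/(r*ε')) = a * ((1/a) * Real.log (2*K/(r*ε'))) := by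
              field_simp
          _ ≤ a * σ := mul_le_mul_of_nonneg_left h3 ha0.le
      have h5 : Real.exp (-(a*σ)) ≤ (2*K/(r*ε'))⁻¹ := by
        rw [← Real.exp_log hq0, ← Real.exp_neg]
        exact Real.exp_le_exp.mpr (by linarith)
      calc K * Real.exp (-(a*σ)) ≤ K * (2*K/(r*ε'))⁻¹ :=
            mul_le_mul_of_nonneg_left h5 hK0.le
        _ = r*ε'/2 := by field_simp
  have hρσ : 1 - ε' ≤ a / (r + K * Real.exp (-(a*σ))) := by
    have hX0 : 0 ≤ K * Real.exp (-(a*σ)) := by positivity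
    have hden0 : 0 < r + K * Real.exp (-(a*σ)) := by positivity
    rw [le_div_iff₀ hden0]
    have hXe : (1-ε') * (K * Real.exp (-(a*σ))) ≤ r*ε'/2 := by
      calc (1-ε') * (K * Real.exp (-(a*σ))) ≤ 1 * (K * Real.exp (-(a*σ))) := by
            apply mul_le_mul_of_nonneg_right (by linarith) hX0
        _ = K * Real.exp (-(a*σ)) := one_mul _
        _ ≤ r*ε'/2 := hKe
    nlinarith [hXe, har, hε'0, hr]
  refine ⟨max (T₁ + σ) ((R + c₂*σ)/(c₂ - c) + σ), ?_⟩
  intro t htT₂ x hxabs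
  set T : ℝ := t - σ with hTdef
  have hTT₁ : T₁ ≤ T := by
    have := le_trans (le_max_left (T₁ + σ) _) htT₂
    rw [hTdef]; linarith
  have hT0 : 0 < T := lt_of_lt_of_le hT₁0 hTT₁
  have hconeT : c*t + R ≤ c₂ * T := by
    have h6 := le_trans (le_max_right (T₁ + σ) ((R + c₂*σ)/(c₂ - c) + σ)) htT₂
    have h7 : (R + c₂*σ)/(c₂ - c) ≤ t - σ := by linarith
    rw [div_le_iff₀ (by linarith : (0:ℝ) < c₂ - c)] at h7
    have h8 : c*σ ≤ c₂*σ := mul_le_mul_of_nonneg_right hcc₂.le hσ0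
    rw [hTdef]
    nlinarith [h7]
  have hushift := hu.shift T (x - R) hT0.le
  have hinit2 : ∀ y ∈ Icc (0:ℝ) (2*R), δ' ≤ (fun τ y => u (τ + T) (y + (x - R))) 0 y := by
    intro y hy
    simp only [zero_add]
    have h8 : |y + (x - R)| ≤ c₂ * T := by
      have h9 : |y - R| ≤ R := by
        rw [abs_le]; constructor <;> [linarith [hy.1]; linarith [hy.2]]
      calc |y + (x - R)| = |x + (y - R)| := by ring_nf
        _ ≤ |x| + |y - R| := abs_add_le _ _
        _ ≤ c*t + R := by linarith
        _ ≤ c₂ * T := hconeT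
    calc δ' ≤ δ := hδ'δ
      _ ≤ u T (y + (x - R)) := hstep1 T hTT₁ _ h8
  have hkey := step2_core d r R δ' σ hd hr hR0 hσ0 hδ'0 (hadef ▸ ha0) (hadef ▸ hδ'a)
    _ hushift hinit2
  have h10 : σ + T = t := by rw [hTdef]; ring
  have h11 : R + (x - R) = x := by ring
  rw [h10, h11] at hkey
  calc 1 - ε' ≤ a / (r + K * Real.exp (-(a*σ))) := hρσ
    _ ≤ u t x := by
      rw [hKdef, hadef]
      exact hkey


set_option maxHeartbeats 1000000 in
/-- Lemma 3.5: for every `c < 2√(d₁r₁)`,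
`liminf_{t→∞} inf_{|x| ≤ ct} u₁(t,x) ≥ 1`. -/
theorem first_component_spreading_lower_bound
    (d₁ d₂ r₁ r₂ b₁ b₂ : ℝ)
    (hd₁ : 0 < d₁) (hd₂ : 0 < d₂) (hr₁ : 0 < r₁) (hr₂ : 0 < r₂)
    (hb₁ : 0 < b₁) (hb₂ : 0 < b₂) (hbb : b₁ * b₂ < 1)
    (φ₁ φ₂ : ℝ → ℝ)
    (hφ₁pos : ∀ x, 0 < φ₁ x) (hφ₂pos : ∀ x, 0 < φ₂ x)
    (hφ₁bdd : ∃ M, ∀ x, φ₁ x ≤ M) (hφ₂bdd : ∃ M, ∀ x, φ₂ x ≤ M)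
    (hφ₁uc : UniformContinuous φ₁) (hφ₂uc : UniformContinuous φ₂)
    (u₁ u₂ : ℝ → ℝ → ℝ)
    (hu : IsLVSolution d₁ d₂ r₁ r₂ b₁ b₂ φ₁ φ₂ u₁ u₂)
    (hnn : ∀ t x : ℝ, 0 ≤ t → 0 ≤ u₁ t x ∧ 0 ≤ u₂ t x)
    (c : ℝ) (hc0 : 0 < c) (hc : c < 2 * Real.sqrt (d₁ * r₁)) :
    1 ≤ liminf (fun t => sInf (u₁ t '' Icc (-(c * t)) (c * t))) atTop := by
  have hSuper : Super d₁ r₁ u₁ := by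
    constructor
    · exact hu.reg1.unifCont.continuousOn
    · intro x t ht
      exact ((hu.reg1.contT x).differentiableOn (by norm_num)).differentiableAt
        (Ioi_mem_nhds ht)
    · exact hu.reg1.contX
    · intro t x ht
      rw [hu.pde1 t x ht]
      have h1 : 0 ≤ r₁ * u₁ t x * (b₁ * u₂ t x) :=
        mul_nonneg (mul_nonneg hr₁.le (hnn t x ht.le).1) (mul_nonneg hb₁.le (hnn t x ht.le).2)
      nlinarith [h1]
    · exact fun t x ht => (hnn t x ht).1
  have h0pos : ∀ x, 0 < u₁ 0 x := fun x => (hu.init1 x) ▸ hφ₁pos x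
  have h0cont : Continuous (u₁ 0) := by
    have h : u₁ 0 = φ₁ := funext hu.init1
    rw [h]
    exact hφ₁uc.continuous
  have hsq : c^2 < 4*d₁*r₁ := by
    have h1 : 0 < Real.sqrt (d₁*r₁) := Real.sqrt_pos.mpr (by positivity)
    have h2 : (2*Real.sqrt (d₁*r₁))^2 = 4*d₁*r₁ := by
      rw [mul_pow, Real.sq_sqrt (by positivity : (0:ℝ) ≤ d₁*r₁)]; ring
    nlinarith [hc, hc0]
  obtain ⟨δ, hδ0, c₂, hcc₂, T₁, hT₁0, hstep1⟩ :=
    step1_uniform d₁ r₁ c hd₁ hr₁ hc0 hsq u₁ hSuper h0pos h0cont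
  set f : ℝ → ℝ := fun t => sInf (u₁ t '' Icc (-(c*t)) (c*t)) with hfdef
  obtain ⟨M, hM⟩ := hu.reg1.bounded
  have hbdd : IsBoundedUnder (· ≤ ·) atTop f := by
    refine ⟨M, ?_⟩
    rw [eventually_map]
    filter_upwards [eventually_ge_atTop (0:ℝ)] with t ht
    have hct : 0 ≤ c*t := mul_nonneg hc0.le ht
    have h0mem : (0:ℝ) ∈ Icc (-(c*t)) (c*t) := ⟨by linarith, hct⟩
    have hBdd : BddBelow (u₁ t '' Icc (-(c*t)) (c*t)) := by
      refine ⟨0, ?_⟩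
      rintro z ⟨y, -, rfl⟩
      exact (hnn t y ht).1
    calc f t ≤ u₁ t 0 := csInf_le hBdd ⟨0, h0mem, rfl⟩
      _ ≤ M := le_trans (le_abs_self _) (hM t 0 ht)
  have hliminfge : ∀ ε' : ℝ, 0 < ε' → ε' < 1 → 1 - ε' ≤ liminf f atTop := by
    intro ε' h1 h2
    obtain ⟨T₂, hT₂⟩ := cone_lift d₁ r₁ c c₂ δ T₁ hd₁ hr₁ hc0 hcc₂ hδ0 hT₁0 u₁ hSuper
      hstep1 ε' h1 h2
    apply le_liminf_of_le hbdd.isCoboundedUnder_ge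
    filter_upwards [eventually_ge_atTop T₂, eventually_ge_atTop (0:ℝ)] with t hmt ht0
    have hct : 0 ≤ c*t := mul_nonneg hc0.le ht0
    apply le_csInf
    · exact ⟨u₁ t 0, 0, ⟨by linarith, hct⟩, rfl⟩
    · rintro z ⟨y, hy, rfl⟩
      exact hT₂ t hmt y (abs_le.mpr hy)
  by_contra hcon
  push_neg at hcon
  obtain ⟨lf, hlfdef⟩ : ∃ lf : ℝ, lf = liminf f atTop := ⟨_, rfl⟩
  rw [← hlfdef] at hcon
  have h1 : 0 < min (1/2) ((1 - lf)/2) := by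
    apply lt_min (by norm_num)
    linarith
  have h2 : min (1/2) ((1 - lf)/2) < 1 := lt_of_le_of_lt (min_le_left _ _) (by norm_num)
  have h3 := hliminfge _ h1 h2
  rw [← hlfdef] at h3
  have h4 : min (1/2) ((1 - lf)/2) ≤ (1 - lf)/2 := min_le_right _ _
  linarith
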